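/- For all real a > 0, b > 0 and q > 0, ∫₀¹ (1 + a(1-u))^{q-1} / (1 + b·u)^{q+1} du = ((1+a)^q - (1+b)^{-q}) / ((a + a·b + b)·q). -/

import Mathlib

/-- For `a, b, q > 0`,
`∫₀¹ (1+a(1-u))^{q-1}/(1+bu)^{q+1} du = ((1+a)^q - (1+b)^{-q}) / ((a+ab+b)q)`. -/
theorem integral_unit_interval_rpow (a b q : ℝ) (ha : 0 < a) (hb : 0 < b) (hq : 0 < q) :
    ∫ u in (0:ℝ)..1, (1 + a * (1 - u)) ^ (q - 1) / (1 + b * u) ^ (q + 1)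
      = ((1 + a) ^ q - (1 + b) ^ (-q)) / ((a + a * b + b) * q) := by
  have hc : 0 < a + a * b + b := by positivity
  have hC : (0:ℝ) < (a + a * b + b) * q := by positivity
  set F : ℝ → ℝ := fun u => -((1 + a * (1 - u)) / (1 + b * u)) ^ q / ((a + a * b + b) * q)
    with hFdef
  have key : ∀ u ∈ Set.uIcc (0:ℝ) 1,
      HasDerivAt F ((1 + a * (1 - u)) ^ (q - 1) / (1 + b * u) ^ (q + 1)) u := by
    intro u hu
    rw [Set.uIcc_of_le (by norm_num)] at hu
    obtain ⟨hu0, hu1⟩ := hu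
    have hN : (0:ℝ) < 1 + a * (1 - u) := by nlinarith
    have hD : (0:ℝ) < 1 + b * u := by nlinarith
    have h1 : HasDerivAt (fun u : ℝ => 1 + a * (1 - u)) (-a) u := by
      have := (((hasDerivAt_id u).const_sub 1).const_mul a).const_add 1
      simpa using this
    have h2 : HasDerivAt (fun u : ℝ => 1 + b * u) b u := by
      have := ((hasDerivAt_id u).const_mul b).const_add 1
      simpa using this
    have hg : HasDerivAt (fun u : ℝ => (1 + a * (1 - u)) / (1 + b * u))
        ((-a * (1 + b * u) - (1 + a * (1 - u)) * b) / (1 + b * u) ^ 2) u :=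
      h1.div h2 hD.ne'
    have hgpos : (0:ℝ) < (1 + a * (1 - u)) / (1 + b * u) := div_pos hN hD
    have hgq := hg.rpow_const (p := q) (Or.inl hgpos.ne')
    have hfinal := (hgq.neg).div_const ((a + a * b + b) * q)
    convert hfinal using 1
    case e'_4 => rfl
    case e'_5 => rfl
    case e'_8 => rfl
    have hsplit : ((1 + a * (1 - u)) / (1 + b * u)) ^ (q - 1)
        = (1 + a * (1 - u)) ^ (q - 1) / (1 + b * u) ^ (q - 1) :=
      Real.div_rpow hN.le hD.le _
    have hD2 : (1 + b * u) ^ (q + 1) = (1 + b * u) ^ (q - 1) * (1 + b * u) ^ (2:ℕ) := by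
      rw [← Real.rpow_natCast _ 2, ← Real.rpow_add hD]
      ring_nf
    rw [hsplit, hD2]
    have hNq : (0:ℝ) < (1 + a * (1 - u)) ^ (q - 1) := Real.rpow_pos_of_pos hN _
    have hDq : (0:ℝ) < (1 + b * u) ^ (q - 1) := Real.rpow_pos_of_pos hD _
    field_simp
    ring
  have hint : IntervalIntegrable
      (fun u => (1 + a * (1 - u)) ^ (q - 1) / (1 + b * u) ^ (q + 1))
      MeasureTheory.volume 0 1 := by
    apply ContinuousOn.intervalIntegrable
    apply ContinuousOn.div
    · apply ContinuousOn.rpow_const (by fun_prop)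
      intro x hx
      rw [Set.uIcc_of_le (by norm_num)] at hx
      obtain ⟨hx0, hx1⟩ := hx
      left
      nlinarith
    · apply ContinuousOn.rpow_const (by fun_prop)
      intro x hx
      rw [Set.uIcc_of_le (by norm_num)] at hx
      obtain ⟨hx0, hx1⟩ := hx
      left
      nlinarith
    · intro x hx
      rw [Set.uIcc_of_le (by norm_num)] at hx
      obtain ⟨hx0, hx1⟩ := hx
      have : (0:ℝ) < 1 + b * x := by nlinarith
      exact (Real.rpow_pos_of_pos this _).ne'
  rw [intervalIntegral.integral_eq_sub_of_hasDerivAt key hint]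
  have hF1 : F 1 = -(1 + b) ^ (-q) / ((a + a * b + b) * q) := by
    simp only [hFdef]
    norm_num
    rw [Real.inv_rpow (by positivity), ← Real.rpow_neg (by positivity)]
  have hF0 : F 0 = -(1 + a) ^ q / ((a + a * b + b) * q) := by
    simp only [hFdef]
    norm_num
  rw [hF1, hF0]
  ring
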